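/- In the Neyman–Scott model with reference prior π_R(θ₁,…,θ_n, σ²) ∝ (σ²)^{-1}, the marginal posterior of σ² is proportional to (σ²)^{-n(k−1)/2 − 1} exp[−n(k−1)S/(2σ²)], whose mean n(k−1)S/(n(k−1)−2) converges in probability to σ², i.e., the posterior mean is a consistent estimator of σ². -/

import Mathlib

open MeasureTheory ProbabilityTheory Filter Real
open scoped ENNReal NNReal Topology

/-! ### Auxiliary lemmas -/

lemma ns_sum_sq_expand {k : ℕ} (y : Fin k → ℝ) (c : ℝ) :
    ∑ j, (y j - c)^2 = ∑ j, (y j)^2 - 2*c*(∑ j, y j) + k * c^2 := by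
  rw [Finset.sum_congr rfl
    (fun j _ => (by ring : (y j - c)^2 = (y j)^2 - 2*c* y j + c^2))]
  rw [Finset.sum_add_distrib, Finset.sum_sub_distrib, ← Finset.mul_sum,
    Finset.sum_const, Finset.card_univ, Fintype.card_fin, nsmul_eq_mul]

lemma ns_sum_sq_decomp {k : ℕ} (hk : (k:ℝ) ≠ 0) (y : Fin k → ℝ) (u : ℝ) :
    ∑ j, (y j - u)^2
      = k * (u - (∑ j, y j)/k)^2 + ∑ j, (y j - (∑ j, y j)/k)^2 := by
  rw [ns_sum_sq_expand, ns_sum_sq_expand]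
  field_simp
  ring

lemma ns_w_identity {k : ℕ} (hk : (k:ℝ) ≠ 0) (y : Fin k → ℝ) :
    ∑ j, (y j - (∑ j', y j')/(k:ℝ))^2 = ∑ j, (y j)^2 - (∑ j, y j)^2/(k:ℝ) := by
  rw [ns_sum_sq_expand]
  field_simp
  ring

lemma ns_one_dim (k : ℕ) (hk : 0 < k) {v : ℝ} (hv : 0 < v) (y : Fin k → ℝ) :
    ∫ u : ℝ, ∏ j, (2*π*v)^(-(1/2:ℝ)) * Real.exp (-(y j - u)^2/(2*v))
    = ((2*π)^(-(((k:ℝ))-1)/2) * (k:ℝ)^(-(1/2:ℝ))) * v^(-(((k:ℝ))-1)/2)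
        * Real.exp (-(∑ j, (y j - (∑ j', y j')/(k:ℝ))^2)/(2*v)) := by
  have hπ : (0:ℝ) < 2*π := by positivity
  have hπv : (0:ℝ) < 2*π*v := by positivity
  have hk' : ((k:ℝ)) ≠ 0 := Nat.cast_ne_zero.mpr hk.ne'
  have hkpos : (0:ℝ) < k := Nat.cast_pos.mpr hk
  set m := (∑ j, y j)/(k:ℝ) with hm
  set SS := ∑ j, (y j - m)^2 with hSS
  have h1 : ∀ u : ℝ, ∏ j : Fin k, (2*π*v)^(-(1/2:ℝ)) * Real.exp (-(y j - u)^2/(2*v))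
      = ((2*π*v)^(-(1/2:ℝ)))^k * Real.exp (-SS/(2*v))
        * Real.exp (-((k:ℝ)/(2*v)) * (u - m)^2) := by
    intro u
    rw [Finset.prod_mul_distrib, Finset.prod_const, Finset.card_univ, Fintype.card_fin,
      ← Real.exp_sum]
    have : ∑ j : Fin k, -(y j - u)^2/(2*v) = -(∑ j : Fin k, (y j - u)^2)/(2*v) := by
      rw [← Finset.sum_div, ← Finset.sum_neg_distrib]
    rw [this, ns_sum_sq_decomp hk' y u, ← hm, ← hSS]
    conv_rhs => rw [mul_assoc, ← Real.exp_add]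
    congr 2
    ring
  simp_rw [h1]
  rw [integral_const_mul]
  rw [show (fun u : ℝ => Real.exp (-((k:ℝ)/(2*v)) * (u - m)^2))
        = (fun u : ℝ => (fun w => Real.exp (-((k:ℝ)/(2*v)) * w^2)) (u - m)) from rfl]
  rw [integral_sub_right_eq_self (fun w => Real.exp (-((k:ℝ)/(2*v)) * w^2)) m]
  rw [integral_gaussian]
  have h2 : π/((k:ℝ)/(2*v)) = 2*π*v/(k:ℝ) := by field_simp
  rw [h2]
  have h3 : Real.sqrt (2*π*v/(k:ℝ))
      = (2*π)^((1:ℝ)/2) * v^((1:ℝ)/2) * ((k:ℝ))^(-(1/2:ℝ)) := by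
    rw [Real.sqrt_eq_rpow, div_rpow (by positivity) hkpos.le,
      mul_rpow hπ.le hv.le, Real.rpow_neg hkpos.le, div_eq_mul_inv]
  have h4 : ((2*π*v)^(-(1/2:ℝ)))^k = (2*π)^(-((k:ℝ))/2) * v^(-((k:ℝ))/2) := by
    rw [← Real.rpow_natCast ((2*π*v)^(-(1/2:ℝ))) k, ← Real.rpow_mul hπv.le,
      mul_rpow hπ.le hv.le]
    norm_num
    congr 1 <;> (congr 1; ring)
  rw [h3, h4]
  rw [show (2*π)^(-((k:ℝ))/2) * v^(-((k:ℝ))/2) * Real.exp (-SS/(2*v))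
        * ((2*π)^((1:ℝ)/2) * v^((1:ℝ)/2) * ((k:ℝ))^(-(1/2:ℝ)))
      = ((2*π)^(-((k:ℝ))/2) * (2*π)^((1:ℝ)/2)) * ((k:ℝ))^(-(1/2:ℝ))
        * (v^(-((k:ℝ))/2) * v^((1:ℝ)/2)) * Real.exp (-SS/(2*v)) from by ring]
  rw [← Real.rpow_add hπ, ← Real.rpow_add hv]
  norm_num
  ring_nf

lemma ns_shape (n k : ℕ) (hk : 0 < k) {v : ℝ} (hv : 0 < v) (x : Fin n → Fin k → ℝ) :
    (∫ t : Fin n → ℝ, ∏ i, ∏ j,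
        (2*π*v)^(-(1/2:ℝ)) * Real.exp (-(x i j - t i)^2/(2*v))) * v^(-(1:ℝ))
    = ((2*π)^(-(((k:ℝ))-1)/2) * (k:ℝ)^(-(1/2:ℝ)))^n * v^(-((n:ℝ)*((k:ℝ)-1)/2) - 1) *
        Real.exp (-(∑ i, ∑ j, (x i j - (∑ j', x i j')/(k:ℝ))^2)/(2*v)) := by
  have h0 : (∫ t : Fin n → ℝ, ∏ i, ∏ j,
        (2*π*v)^(-(1/2:ℝ)) * Real.exp (-(x i j - t i)^2/(2*v)))
      = ∏ i, ∫ u : ℝ, ∏ j, (2*π*v)^(-(1/2:ℝ)) * Real.exp (-(x i j - u)^2/(2*v)) :=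
    MeasureTheory.integral_fintype_prod_eq_prod
      (fun i u => ∏ j, (2*π*v)^(-(1/2:ℝ)) * Real.exp (-(x i j - u)^2/(2*v)))
  rw [h0, Finset.prod_congr rfl (fun i _ => ns_one_dim k hk hv (x i)),
    Finset.prod_mul_distrib, Finset.prod_mul_distrib, Finset.prod_const, Finset.prod_const,
    Finset.card_univ, Fintype.card_fin, ← Real.exp_sum]
  have h2 : ∑ i, -(∑ j, (x i j - (∑ j', x i j')/(k:ℝ))^2)/(2*v)
      = -(∑ i, ∑ j, (x i j - (∑ j', x i j')/(k:ℝ))^2)/(2*v) := by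
    rw [← Finset.sum_div, ← Finset.sum_neg_distrib]
  rw [h2]
  have h3 : (v^(-(((k:ℝ))-1)/2))^n * v^(-(1:ℝ)) = v^(-((n:ℝ)*((k:ℝ)-1)/2) - 1) := by
    rw [← Real.rpow_natCast (v^(-(((k:ℝ))-1)/2)) n, ← Real.rpow_mul hv.le, ← Real.rpow_add hv]
    congr 1; ring
  rw [show ((2*π)^(-(((k:ℝ))-1)/2) * (k:ℝ)^(-(1/2:ℝ)))^n * (v^(-(((k:ℝ))-1)/2))^n *
      Real.exp (-(∑ i, ∑ j, (x i j - (∑ j', x i j')/(k:ℝ))^2)/(2*v)) * v^(-(1:ℝ))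
      = ((2*π)^(-(((k:ℝ))-1)/2) * (k:ℝ)^(-(1/2:ℝ)))^n * ((v^(-(((k:ℝ))-1)/2))^n * v^(-(1:ℝ))) *
      Real.exp (-(∑ i, ∑ j, (x i j - (∑ j', x i j')/(k:ℝ))^2)/(2*v)) from by ring, h3]

/-! ### Gaussian moment lemmas -/

lemma ns_gaussian_pdf_coe (μ : ℝ) (v : ℝ≥0) :
    gaussianPDF μ v = fun x => ((fun y => (gaussianPDFReal μ v y).toNNReal) x : ℝ≥0∞) := rfl

lemma ns_gaussian_integral {v : ℝ≥0} (hv : v ≠ 0) (g : ℝ → ℝ) :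
    ∫ x, g x ∂(gaussianReal 0 v) = ∫ x, gaussianPDFReal 0 v x * g x := by
  rw [gaussianReal_of_var_ne_zero 0 hv, ns_gaussian_pdf_coe,
    integral_withDensity_eq_integral_smul
      ((measurable_gaussianPDFReal 0 v).real_toNNReal) g]
  congr 1
  funext x
  rw [NNReal.smul_def, smul_eq_mul, Real.coe_toNNReal _ (gaussianPDFReal_nonneg 0 v x)]

lemma ns_gaussian_integrable_iff {v : ℝ≥0} (hv : v ≠ 0) (g : ℝ → ℝ) :
    Integrable g (gaussianReal 0 v) ↔
      Integrable (fun x => gaussianPDFReal 0 v x * g x) volume := by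
  rw [gaussianReal_of_var_ne_zero 0 hv, ns_gaussian_pdf_coe,
    integrable_withDensity_iff_integrable_smul
      ((measurable_gaussianPDFReal 0 v).real_toNNReal)]
  constructor <;> intro h <;> refine h.congr (Filter.Eventually.of_forall fun x => ?_) <;>
    simp only [NNReal.smul_def, smul_eq_mul,
      Real.coe_toNNReal _ (gaussianPDFReal_nonneg 0 v x)]

lemma ns_rpow_two (x : ℝ) : x ^ (2:ℝ) = x ^ 2 := by
  rw [show (2:ℝ) = ((2:ℕ):ℝ) by norm_num, Real.rpow_natCast]

lemma ns_vpos {v : ℝ≥0} (hv : v ≠ 0) : (0:ℝ) < (v:ℝ) := by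
  exact_mod_cast zero_lt_iff.mpr hv

lemma ns_pdf_eq {v : ℝ≥0} (hv : v ≠ 0) (x : ℝ) :
    gaussianPDFReal 0 v x = (Real.sqrt (2*π*v))⁻¹ * Real.exp (-(2*(v:ℝ))⁻¹ * x^2) := by
  simp only [gaussianPDFReal_def]
  rw [show (-(x - 0) ^ 2 / (2 * (v:ℝ))) = (-(2*(v:ℝ))⁻¹ * x^2) from by ring]

lemma ns_gaussian_sq_integrable {v : ℝ≥0} (hv : v ≠ 0) :
    Integrable (fun x : ℝ => x^2) (gaussianReal 0 v) := by
  rw [ns_gaussian_integrable_iff hv]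
  have hb : (0:ℝ) < (2*(v:ℝ))⁻¹ := by have := ns_vpos hv; positivity
  have key : Integrable (fun x : ℝ => x^2 * Real.exp (-(2*(v:ℝ))⁻¹ * x^2)) volume := by
    have h := integrable_rpow_mul_exp_neg_mul_sq hb (s := 2) (by norm_num)
    exact h.congr (Filter.Eventually.of_forall fun x => by simp only [ns_rpow_two])
  refine ((key.const_mul ((Real.sqrt (2*π*v))⁻¹)).congr
    (Filter.Eventually.of_forall fun x => ?_))
  simp only [ns_pdf_eq hv]
  ring

lemma ns_gaussian_memLp2 {v : ℝ≥0} (hv : v ≠ 0) :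
    MemLp (id : ℝ → ℝ) 2 (gaussianReal 0 v) := by
  refine (memLp_two_iff_integrable_sq aestronglyMeasurable_id).2 ?_
  exact ns_gaussian_sq_integrable hv

lemma ns_gaussian_mean {v : ℝ≥0} (hv : v ≠ 0) : ∫ x, x ∂(gaussianReal 0 v) = 0 := by
  rw [ns_gaussian_integral hv]
  set g : ℝ → ℝ := fun x => gaussianPDFReal 0 v x * x with hg
  have hodd : ∀ x, g (-x) = - g x := by
    intro x
    simp only [hg]
    rw [ns_pdf_eq hv, ns_pdf_eq hv, show ((-x)^2 : ℝ) = x^2 from by ring]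
    ring
  have h1 : ∫ x, g x = ∫ x, g (-x) := by
    conv_lhs => rw [← Measure.map_neg_eq_self (volume : Measure ℝ)]
    exact MeasureTheory.integral_map_equiv (Homeomorph.neg ℝ).toMeasurableEquiv g
  have h2 : ∫ x, g (-x) = - ∫ x, g x := by
    simp_rw [hodd]
    exact integral_neg g
  linarith [h1, h2]

lemma ns_gaussian_second_moment {v : ℝ≥0} (hv : v ≠ 0) :
    ∫ x, x^2 ∂(gaussianReal 0 v) = v := by
  have hvpos := ns_vpos hv
  have hb : (0:ℝ) < (2*(v:ℝ))⁻¹ := by positivity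
  rw [ns_gaussian_integral hv]
  have h1 : ∀ x : ℝ, gaussianPDFReal 0 v x * x^2
      = (Real.sqrt (2*π*v))⁻¹ * ((fun y => y^2 * Real.exp (-(2*(v:ℝ))⁻¹ * y^2)) |x|) := by
    intro x
    simp only [sq_abs]
    rw [ns_pdf_eq hv]
    ring
  simp_rw [h1]
  rw [integral_const_mul,
    integral_comp_abs (f := fun y => y^2 * Real.exp (-(2*(v:ℝ))⁻¹ * y^2))]
  have h2 : ∫ x in Set.Ioi (0:ℝ), x^2 * Real.exp (-(2*(v:ℝ))⁻¹ * x^2)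
      = ((2*(v:ℝ))⁻¹) ^ (-(3:ℝ)/2) * (1/2) * Real.Gamma (3/2) := by
    have h := integral_rpow_mul_exp_neg_mul_rpow (p := 2) (q := 2) (b := (2*(v:ℝ))⁻¹)
      (by norm_num) (by norm_num) hb
    rw [show (-(2+1)/2 : ℝ) = -(3:ℝ)/2 by norm_num, show ((2+1)/2 : ℝ) = (3/2:ℝ) by norm_num] at h
    rw [← h]
    refine setIntegral_congr_fun measurableSet_Ioi (fun x hx => ?_)
    simp only [ns_rpow_two]
  rw [h2]
  have hGamma : Real.Gamma (3/2) = Real.sqrt π / 2 := by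
    rw [show (3/2 : ℝ) = 1/2 + 1 by norm_num, Real.Gamma_add_one (by norm_num),
      Real.Gamma_one_half_eq]
    ring
  rw [hGamma]
  rw [show ((2*(v:ℝ))⁻¹) ^ (-(3:ℝ)/2) = (2*(v:ℝ)) ^ ((3:ℝ)/2) by
    rw [← Real.rpow_neg_one (2*(v:ℝ)), ← Real.rpow_mul (by positivity)]
    norm_num]
  have h3 : Real.sqrt (2*π*(v:ℝ)) = Real.sqrt π * (2*(v:ℝ)) ^ ((1:ℝ)/2) := by
    rw [Real.sqrt_eq_rpow, Real.sqrt_eq_rpow, ← Real.mul_rpow Real.pi_pos.le (by positivity)]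
    congr 1
    ring
  rw [h3]
  have h4 : (2*(v:ℝ)) ^ ((3:ℝ)/2) = (2*(v:ℝ)) ^ ((1:ℝ)/2) * (2*(v:ℝ)) := by
    rw [show (3:ℝ)/2 = 1/2 + 1 by norm_num, Real.rpow_add (by positivity), Real.rpow_one]
  rw [h4]
  have h5 : (0:ℝ) < (2*(v:ℝ)) ^ ((1:ℝ)/2) := Real.rpow_pos_of_pos (by positivity) _
  have h6 : (0:ℝ) < Real.sqrt π := Real.sqrt_pos.2 Real.pi_pos
  field_simp

/-! ### Main theorem -/

theorem neyman_scott_reference_consistent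
    {Ω : Type*} [MeasureSpace Ω] [IsProbabilityMeasure (ℙ : Measure Ω)]
    (k : ℕ) (hk : 2 ≤ k) (θ : ℕ → ℝ) (σ2 : NNReal) (hσ2 : 0 < σ2)
    (X : ℕ → Fin k → Ω → ℝ)
    (hmeas : ∀ i j, Measurable (X i j))
    (hindep : iIndepFun
      (fun (p : ℕ × Fin k) ω => X p.1 p.2 ω) ℙ)
    (hdist : ∀ i j, Measure.map (X i j) ℙ = gaussianReal (θ i) σ2) :
    -- shape of the marginal posterior of σ² under the reference prior
    (∀ n : ℕ, 0 < n → ∃ c : ℝ, 0 < c ∧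
      ∀ (x : Fin n → Fin k → ℝ) (v : ℝ), 0 < v →
        (∫ t : Fin n → ℝ, ∏ i, ∏ j,
            (2 * π * v) ^ (-(1 / 2 : ℝ)) * Real.exp (-(x i j - t i) ^ 2 / (2 * v)))
          * v ^ (-(1 : ℝ))
        = c * v ^ (-((n : ℝ) * (k - 1) / 2) - 1) *
            Real.exp (-(∑ i, ∑ j, (x i j - (∑ j' : Fin k, x i j') / k) ^ 2) / (2 * v))) ∧
    -- the posterior mean n(k-1)S/(n(k-1)-2) is consistent for σ²
    TendstoInMeasure ℙ
      (fun n ω =>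
        (∑ i ∈ Finset.range n, ∑ j : Fin k,
            (X i j ω - (∑ j' : Fin k, X i j' ω) / k) ^ 2) / (n * (k - 1) - 2))
      atTop (fun _ => (σ2 : ℝ)) := by
  have hk0 : 0 < k := lt_of_lt_of_le (by norm_num) hk
  have hkR : (0:ℝ) < (k:ℝ) := Nat.cast_pos.mpr hk0
  have hkne : ((k:ℝ)) ≠ 0 := hkR.ne'
  have hk1 : (1:ℝ) ≤ (k:ℝ) - 1 := by
    have : (2:ℝ) ≤ (k:ℝ) := by exact_mod_cast hk
    linarith
  have hk1ne : ((k:ℝ) - 1) ≠ 0 := by linarith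
  have hσ2' : σ2 ≠ 0 := hσ2.ne'
  constructor
  · -- Part 1 : posterior shape
    intro n hn
    refine ⟨((2*π)^(-(((k:ℝ))-1)/2) * (k:ℝ)^(-(1/2:ℝ)))^n, by positivity, ?_⟩
    intro x v hv
    exact ns_shape n k hk0 hv x
  · -- Part 2 : consistency
    -- the centered variables
    set Y : ℕ → Fin k → Ω → ℝ := fun i j ω => X i j ω - θ i with hY
    have hYmeas : ∀ i j, Measurable (Y i j) := fun i j => (hmeas i j).sub_const _
    have hYlaw : ∀ i j, Measure.map (Y i j) ℙ = gaussianReal 0 σ2 := by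
      intro i j
      have hc : Y i j = (fun x : ℝ => x + (-θ i)) ∘ (X i j) :=
        funext fun ω => by simp [hY, sub_eq_add_neg]
      have hgm : Measurable (fun x : ℝ => x + (-θ i)) := measurable_id.add_const _
      rw [hc, ← Measure.map_map hgm (hmeas i j), hdist i j,
        gaussianReal_map_add_const]
      simp
    -- vector of centered variables
    set V : ℕ → Ω → (Fin k → ℝ) := fun i ω j => Y i j ω with hV
    have hVmeas : ∀ i, Measurable (V i) :=
      fun i => measurable_pi_lambda _ fun j => hYmeas i j
    -- the law of V i is the product of standard gaussians
    have hVlaw : ∀ i, Measure.map (V i) ℙ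
        = Measure.pi (fun _ : Fin k => gaussianReal 0 σ2) := by
      intro i
      classical
      refine (Measure.pi_eq fun s hs => ?_).symm
      rw [Measure.map_apply (hVmeas i) (MeasurableSet.univ_pi hs)]
      have hpre : V i ⁻¹' (Set.univ.pi s)
          = ⋂ p ∈ Finset.univ.image (fun j : Fin k => ((i, j) : ℕ × Fin k)),
              (fun ω => X p.1 p.2 ω) ⁻¹' ((fun x : ℝ => x - θ i) ⁻¹' (s p.2)) := by
        ext ω
        simp [hV, hY, Set.mem_pi]
      have hinj : ∀ a ∈ (Finset.univ : Finset (Fin k)), ∀ b ∈ (Finset.univ : Finset (Fin k)),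
          ((i, a) : ℕ × Fin k) = (i, b) → a = b := by
        intro a _ b _ hab
        simpa using hab
      have hmain := hindep.measure_inter_preimage_eq_mul
        (S := Finset.univ.image (fun j : Fin k => ((i, j) : ℕ × Fin k)))
        (sets := fun p => (fun x : ℝ => x - θ i) ⁻¹' (s p.2))
        (fun p _ => (hs p.2).preimage (measurable_id.sub_const _))
      rw [hpre, hmain, Finset.prod_image hinj]
      refine Finset.prod_congr rfl fun j _ => ?_
      show ℙ (Y i j ⁻¹' (s j)) = gaussianReal 0 σ2 (s j)
      rw [← Measure.map_apply (hYmeas i j) (hs j), hYlaw i j]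
    -- the statistic
    set F : (Fin k → ℝ) → ℝ := fun t => ∑ j, (t j - (∑ j', t j')/(k:ℝ))^2 with hF
    have hFmeas : Measurable F := by
      apply Finset.measurable_sum
      intro j _
      exact ((measurable_pi_apply j).sub
        ((Finset.measurable_sum _ fun j' _ => measurable_pi_apply j').div_const _)).pow_const 2
    set W : ℕ → Ω → ℝ := fun i ω => F (V i ω) with hW
    have hWmeas : ∀ i, Measurable (W i) := fun i => hFmeas.comp (hVmeas i)
    -- W i equals the statistic expressed with the X's
    have hWX : ∀ i ω, W i ω = ∑ j, (X i j ω - (∑ j', X i j' ω)/(k:ℝ))^2 := by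
      intro i ω
      simp only [hW, hF, hV, hY]
      refine Finset.sum_congr rfl fun j _ => ?_
      congr 1
      rw [Finset.sum_sub_distrib, Finset.sum_const, Finset.card_univ, Fintype.card_fin,
        nsmul_eq_mul]
      field_simp
      ring
    -- identically distributed
    have hident : ∀ i, IdentDistrib (W i) (W 0) ℙ ℙ := by
      intro i
      have hVid : IdentDistrib (V i) (V 0) ℙ ℙ :=
        ⟨(hVmeas i).aemeasurable, (hVmeas 0).aemeasurable, by rw [hVlaw i, hVlaw 0]⟩
      exact hVid.comp hFmeas
    -- pairwise independence
    have hWindep : Pairwise (Function.onFun (IndepFun · · ℙ) W) := by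
      intro a b hab
      classical
      have hdisj : Disjoint (Finset.univ.image (fun j : Fin k => ((a, j) : ℕ × Fin k)))
          (Finset.univ.image (fun j : Fin k => ((b, j) : ℕ × Fin k))) := by
        rw [Finset.disjoint_left]
        rintro ⟨p1, p2⟩ hpa hpb
        simp only [Finset.mem_image, Finset.mem_univ, true_and, Prod.mk.injEq] at hpa hpb
        obtain ⟨ja, hja, -⟩ := hpa
        obtain ⟨jb, hjb, -⟩ := hpb
        exact hab (hja.trans hjb.symm)
      have base := hindep.indepFun_finset _ _ hdisj (fun p => hmeas p.1 p.2)
      set Sa := Finset.univ.image (fun j : Fin k => ((a, j) : ℕ × Fin k)) with hSa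
      set Sb := Finset.univ.image (fun j : Fin k => ((b, j) : ℕ × Fin k)) with hSb
      have hamem : ∀ j : Fin k, ((a, j) : ℕ × Fin k) ∈ Sa :=
        fun j => Finset.mem_image_of_mem _ (Finset.mem_univ j)
      have hbmem : ∀ j : Fin k, ((b, j) : ℕ × Fin k) ∈ Sb :=
        fun j => Finset.mem_image_of_mem _ (Finset.mem_univ j)
      set Ga : ((p : Sa) → ℝ) → ℝ := fun h => ∑ j : Fin k,
        ((h ⟨(a, j), hamem j⟩ - θ a)
          - (∑ j' : Fin k, (h ⟨(a, j'), hamem j'⟩ - θ a))/(k:ℝ))^2 with hGa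
      set Gb : ((p : Sb) → ℝ) → ℝ := fun h => ∑ j : Fin k,
        ((h ⟨(b, j), hbmem j⟩ - θ b)
          - (∑ j' : Fin k, (h ⟨(b, j'), hbmem j'⟩ - θ b))/(k:ℝ))^2 with hGb
      have hGameas : Measurable Ga := by
        apply Finset.measurable_sum
        intro j _
        have h1 : Measurable fun h : (p : Sa) → ℝ => h ⟨(a, j), hamem j⟩ - θ a :=
          by fun_prop
        have h2 : Measurable fun h : (p : Sa) → ℝ =>
            (∑ j' : Fin k, (h ⟨(a, j'), hamem j'⟩ - θ a))/(k:ℝ) :=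
          (Finset.measurable_sum Finset.univ fun j' _ =>
            by fun_prop).div_const _
        exact (h1.sub h2).pow_const 2
      have hGbmeas : Measurable Gb := by
        apply Finset.measurable_sum
        intro j _
        have h1 : Measurable fun h : (p : Sb) → ℝ => h ⟨(b, j), hbmem j⟩ - θ b :=
          by fun_prop
        have h2 : Measurable fun h : (p : Sb) → ℝ =>
            (∑ j' : Fin k, (h ⟨(b, j'), hbmem j'⟩ - θ b))/(k:ℝ) :=
          (Finset.measurable_sum Finset.univ fun j' _ =>
            by fun_prop).div_const _
        exact (h1.sub h2).pow_const 2
      have := base.comp hGameas hGbmeas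
      exact this
    -- integrability helpers
    have hY2 : ∀ j, MemLp (Y 0 j) 2 ℙ := by
      intro j
      have h1 : MemLp (id : ℝ → ℝ) 2 (Measure.map (Y 0 j) ℙ) := by
        rw [hYlaw 0 j]; exact ns_gaussian_memLp2 hσ2'
      exact (memLp_map_measure_iff aestronglyMeasurable_id
        (hYmeas 0 j).aemeasurable).1 h1
    have hYsum2 : MemLp (fun ω => ∑ j', Y 0 j' ω) 2 ℙ := by
      have h := memLp_finset_sum' Finset.univ (fun j (_ : j ∈ Finset.univ) => hY2 j)
      exact h.ae_eq (Filter.Eventually.of_forall fun ω => by simp)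
    have hterm2 : ∀ j, MemLp (fun ω => Y 0 j ω - (∑ j', Y 0 j' ω)/(k:ℝ)) 2 ℙ := by
      intro j
      have h2 : MemLp (fun ω => (∑ j', Y 0 j' ω)/(k:ℝ)) 2 ℙ := by
        simpa [div_eq_inv_mul] using hYsum2.const_mul ((k:ℝ))⁻¹
      exact (hY2 j).sub h2
    have hWint : Integrable (W 0) ℙ := by
      have : Integrable (fun ω => ∑ j, (Y 0 j ω - (∑ j', Y 0 j' ω)/(k:ℝ))^2) ℙ :=
        integrable_finset_sum _ (fun j _ => (hterm2 j).integrable_sq)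
      exact this
    -- moments of the Y's
    have hEY : ∀ j, ∫ ω, Y 0 j ω ∂ℙ = 0 := by
      intro j
      have h := MeasureTheory.integral_map (hYmeas 0 j).aemeasurable
        (aestronglyMeasurable_id (μ := Measure.map (Y 0 j) ℙ))
      rw [hYlaw 0 j] at h
      simpa [ns_gaussian_mean hσ2'] using h.symm
    have hEY2 : ∀ j, ∫ ω, (Y 0 j ω)^2 ∂ℙ = (σ2 : ℝ) := by
      intro j
      have h := MeasureTheory.integral_map (f := fun x : ℝ => x^2)
        (hYmeas 0 j).aemeasurable
        ((measurable_id.pow_const 2).aestronglyMeasurable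
          (μ := Measure.map (Y 0 j) ℙ))
      rw [hYlaw 0 j] at h
      rw [← h, ns_gaussian_second_moment hσ2']
    have hYindep : ∀ a b : Fin k, a ≠ b → IndepFun (Y 0 a) (Y 0 b) ℙ := by
      intro a b hab
      have h := hindep.indepFun (show ((0:ℕ), a) ≠ ((0:ℕ), b) by simpa using hab)
      exact h.comp (measurable_id.sub_const (θ 0)) (measurable_id.sub_const (θ 0))
    have hYab_int : ∀ a b : Fin k, Integrable (fun ω => Y 0 a ω * Y 0 b ω) ℙ := by
      intro a b
      have h : MemLp (Y 0 a • Y 0 b) 1 ℙ := (hY2 b).smul (hY2 a)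
      rw [memLp_one_iff_integrable] at h
      exact h.congr (Filter.Eventually.of_forall fun ω => by
        simp [smul_eq_mul, mul_comm])
    have hEYab : ∀ a b : Fin k, a ≠ b → ∫ ω, Y 0 a ω * Y 0 b ω ∂ℙ = 0 := by
      intro a b hab
      rw [show (∫ ω, Y 0 a ω * Y 0 b ω ∂ℙ) = ∫ ω, (Y 0 a * Y 0 b) ω ∂ℙ from rfl,
        IndepFun.integral_mul_eq_mul_integral (hYindep a b hab) (hYmeas 0 a).aestronglyMeasurable
        (hYmeas 0 b).aestronglyMeasurable, hEY a, hEY b, mul_zero]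
    -- expectation of W 0
    have hEW : ∫ ω, W 0 ω ∂ℙ = ((k:ℝ) - 1) * (σ2 : ℝ) := by
      have hWeq : ∀ ω, W 0 ω
          = ∑ j, (Y 0 j ω)^2 - (∑ j, Y 0 j ω)^2/(k:ℝ) := by
        intro ω
        exact ns_w_identity hkne (fun j => Y 0 j ω)
      have hsum_int : Integrable (fun ω => ∑ j, (Y 0 j ω)^2) ℙ :=
        integrable_finset_sum _ (fun j _ => (hY2 j).integrable_sq)
      have hsq_int : Integrable (fun ω => (∑ j, Y 0 j ω)^2/(k:ℝ)) ℙ :=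
        (hYsum2.integrable_sq).div_const _
      calc ∫ ω, W 0 ω ∂ℙ
          = ∫ ω, (∑ j, (Y 0 j ω)^2 - (∑ j, Y 0 j ω)^2/(k:ℝ)) ∂ℙ := by
            exact integral_congr_ae (Filter.Eventually.of_forall hWeq)
        _ = (∫ ω, ∑ j, (Y 0 j ω)^2 ∂ℙ) - ∫ ω, (∑ j, Y 0 j ω)^2/(k:ℝ) ∂ℙ :=
            integral_sub hsum_int hsq_int
        _ = ((k:ℝ)) * (σ2:ℝ) - ((k:ℝ)) * (σ2:ℝ)/(k:ℝ) := by
            congr 1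
            · rw [integral_finset_sum _ (fun j _ => (hY2 j).integrable_sq)]
              simp [hEY2]
            · rw [integral_div]
              congr 1
              have hexp : ∀ ω, (∑ j, Y 0 j ω)^2 = ∑ a, ∑ b, Y 0 a ω * Y 0 b ω := by
                intro ω
                rw [sq, Finset.sum_mul_sum]
              calc ∫ ω, (∑ j, Y 0 j ω)^2 ∂ℙ
                  = ∫ ω, ∑ a, ∑ b, Y 0 a ω * Y 0 b ω ∂ℙ :=
                    integral_congr_ae (Filter.Eventually.of_forall hexp)
                _ = ∑ a, ∑ b, ∫ ω, Y 0 a ω * Y 0 b ω ∂ℙ := by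
                    rw [integral_finset_sum _
                      (fun a _ => integrable_finset_sum _ (fun b _ => hYab_int a b))]
                    exact Finset.sum_congr rfl fun a _ =>
                      integral_finset_sum _ (fun b _ => hYab_int a b)
                _ = ∑ a : Fin k, (σ2 : ℝ) := by
                    refine Finset.sum_congr rfl fun a _ => ?_
                    rw [Finset.sum_eq_single a]
                    · simpa [sq] using hEY2 a
                    · intro b _ hba
                      exact hEYab a b (Ne.symm hba)
                    · intro h; exact absurd (Finset.mem_univ a) h
                _ = ((k:ℝ)) * (σ2:ℝ) := by
                    rw [Finset.sum_const, Finset.card_univ, Fintype.card_fin, nsmul_eq_mul]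
        _ = ((k:ℝ) - 1) * (σ2 : ℝ) := by field_simp
    -- strong law of large numbers
    have hSL := strong_law_ae_real W hWint hWindep hident
    rw [hEW] at hSL
    -- ratio convergence
    have hfrac : Tendsto (fun n : ℕ => (n:ℝ)/((n:ℝ)*((k:ℝ)-1)-2)) atTop
        (𝓝 (((k:ℝ)-1)⁻¹)) := by
      have h1 : Tendsto (fun n : ℕ => ((k:ℝ)-1) - 2/(n:ℝ)) atTop (𝓝 ((k:ℝ)-1)) := by
        have := tendsto_const_div_atTop_nhds_zero_nat (2:ℝ)
        have h2 := (tendsto_const_nhds (x := (k:ℝ)-1) (f := atTop)).sub this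
        simpa using h2
      have h3 := h1.inv₀ hk1ne
      refine h3.congr' ?_
      filter_upwards [eventually_ge_atTop 1] with n hn
      have hn' : ((n:ℝ)) ≠ 0 := by
        have : (1:ℝ) ≤ (n:ℝ) := by exact_mod_cast hn
        linarith
      rw [show ((k:ℝ)-1) - 2/(n:ℝ) = ((n:ℝ)*((k:ℝ)-1)-2)/(n:ℝ) from by
        field_simp, inv_div]
    -- almost-sure convergence of the posterior mean
    have hae : ∀ᵐ ω ∂ℙ, Tendsto (fun n : ℕ =>
        (∑ i ∈ Finset.range n, ∑ j : Fin k,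
          (X i j ω - (∑ j' : Fin k, X i j' ω) / k) ^ 2) / ((n:ℝ) * ((k:ℝ) - 1) - 2))
        atTop (𝓝 ((σ2 : ℝ))) := by
      filter_upwards [hSL] with ω hω
      have hmul := hω.mul hfrac
      have hlim : ((k:ℝ) - 1) * (σ2:ℝ) * ((k:ℝ)-1)⁻¹ = (σ2 : ℝ) := by
        field_simp
      rw [hlim] at hmul
      refine hmul.congr' ?_
      filter_upwards [eventually_ge_atTop 1] with n hn
      have hn' : ((n:ℝ)) ≠ 0 := by
        have : (1:ℝ) ≤ (n:ℝ) := by exact_mod_cast hn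
        linarith
      have hsum : ∑ i ∈ Finset.range n, W i ω
          = ∑ i ∈ Finset.range n, ∑ j : Fin k,
              (X i j ω - (∑ j' : Fin k, X i j' ω) / k) ^ 2 :=
        Finset.sum_congr rfl fun i _ => hWX i ω
      rw [hsum]
      rw [div_mul_div_comm, mul_comm ((n:ℝ)) (((n:ℝ)*((k:ℝ)-1)-2)),
        mul_div_mul_right _ _ hn']
    -- conclude : convergence in measure
    have hgmeas : ∀ n : ℕ, AEStronglyMeasurable (fun ω =>
        (∑ i ∈ Finset.range n, ∑ j : Fin k,
          (X i j ω - (∑ j' : Fin k, X i j' ω) / k) ^ 2) / ((n:ℝ) * ((k:ℝ) - 1) - 2)) ℙ := by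
      intro n
      refine Measurable.aestronglyMeasurable ?_
      refine Measurable.div_const ?_ _
      refine Finset.measurable_sum _ fun i _ => ?_
      refine Finset.measurable_sum _ fun j _ => ?_
      exact ((hmeas i j).sub
        ((Finset.measurable_sum _ fun j' _ => hmeas i j').div_const _)).pow_const 2
    exact tendstoInMeasure_of_tendsto_ae hgmeas hae
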